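/- With notation as above, every eigenvalue of the adjacency matrix of the tournament T_p^m(S) is of the form Σ_{s∈S} ψ(s) for an additive character ψ of F_p; consequently λ(T_p^m(S)) ≤ ((m−1)√p + 1)/2 ≤ m√p/2. -/

import Mathlib

attribute [local instance] Classical.propDecidable

/-- The adjacency matrix over `ℂ` of the tournament `T_p^m(S)` on `F_p` with edges
`(x,y)` for `x - y ∈ S`. -/
noncomputable def adjTpm (p : ℕ) [NeZero p] (S : Finset (ZMod p)) :
    Matrix (ZMod p) (ZMod p) ℂ :=
  fun x y => if x - y ∈ S then 1 else 0

/-- `μ` is an eigenvalue of the matrix `M`. -/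
def IsEigenvalue {p : ℕ} [NeZero p] (M : Matrix (ZMod p) (ZMod p) ℂ) (μ : ℂ) : Prop :=
  ∃ v : ZMod p → ℂ, v ≠ 0 ∧ M.mulVec v = μ • v

/-- Every eigenvalue of a circulant matrix `adjTpm p S` is a character sum over `S`. -/
lemma eig_char (p : ℕ) [Fact p.Prime] (S : Finset (ZMod p)) (μ : ℂ)
    (hμ : IsEigenvalue (adjTpm p S) μ) :
    ∃ ψ : AddChar (ZMod p) ℂ, μ = ∑ s ∈ S, ψ s := by
  classical
  have hp0 : p ≠ 0 := (Fact.out : p.Prime).ne_zero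
  have hroot := Complex.isPrimitiveRoot_exp p hp0
  set ψ₀ : AddChar (ZMod p) ℂ :=
    AddChar.zmodChar p ((IsPrimitiveRoot.iff_def _ p).mp hroot).left with hψ₀def
  have hprim : ψ₀.IsPrimitive := AddChar.zmodChar_primitive_of_primitive_root p hroot
  obtain ⟨v, hv, hMv⟩ := hμ
  by_contra hcon
  push_neg at hcon
  -- every Fourier coefficient of `v` vanishes
  have hF : ∀ a : ZMod p, ∑ y : ZMod p, ψ₀ (a * y) * v y = 0 := by
    intro a
    set ψ : AddChar (ZMod p) ℂ := ψ₀.mulShift a with hψdef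
    have hne : (∑ s ∈ S, ψ s) - μ ≠ 0 := sub_ne_zero.2 (Ne.symm (hcon ψ))
    have lhs : ∑ x : ZMod p, ψ x * (adjTpm p S).mulVec v x
        = (∑ s ∈ S, ψ s) * (∑ y : ZMod p, ψ y * v y) := by
      calc ∑ x : ZMod p, ψ x * (adjTpm p S).mulVec v x
          = ∑ x : ZMod p, ∑ y : ZMod p, (if x - y ∈ S then ψ x * v y else 0) := by
            refine Finset.sum_congr rfl fun x _ => ?_
            rw [Matrix.mulVec, dotProduct, Finset.mul_sum]
            refine Finset.sum_congr rfl fun y _ => ?_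
            simp only [adjTpm]
            split <;> ring
        _ = ∑ y : ZMod p, ∑ x : ZMod p, (if x - y ∈ S then ψ x * v y else 0) :=
            Finset.sum_comm
        _ = ∑ y : ZMod p, ∑ x : ZMod p, (if x ∈ S then ψ (x + y) * v y else 0) := by
            refine Finset.sum_congr rfl fun y _ => ?_
            refine Fintype.sum_equiv (Equiv.subRight y) _ _ fun x => ?_
            simp
        _ = ∑ y : ZMod p, ∑ s ∈ S, ψ (s + y) * v y := by
            refine Finset.sum_congr rfl fun y _ => ?_
            simp [Finset.sum_ite_mem]
        _ = ∑ y : ZMod p, (∑ s ∈ S, ψ s) * (ψ y * v y) := by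
            refine Finset.sum_congr rfl fun y _ => ?_
            rw [Finset.sum_mul]
            refine Finset.sum_congr rfl fun s _ => ?_
            rw [AddChar.map_add_eq_mul]; ring
        _ = (∑ s ∈ S, ψ s) * ∑ y : ZMod p, ψ y * v y := by rw [Finset.mul_sum]
    have rhs : ∑ x : ZMod p, ψ x * (adjTpm p S).mulVec v x
        = μ * (∑ y : ZMod p, ψ y * v y) := by
      rw [hMv, Finset.mul_sum]
      refine Finset.sum_congr rfl fun x _ => ?_
      simp [Pi.smul_apply, smul_eq_mul]; ring
    have h2 : ((∑ s ∈ S, ψ s) - μ) * (∑ y : ZMod p, ψ y * v y) = 0 := by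
      rw [sub_mul, lhs.symm.trans rhs, sub_self]
    have h3 := (mul_eq_zero.mp h2).resolve_left hne
    simpa [hψdef] using h3
  -- Fourier inversion: `v = 0`, contradiction
  have horth : ∀ z : ZMod p, z ≠ 0 → ∑ a : ZMod p, ψ₀ (a * z) = 0 := by
    intro z hz
    have h2 := AddChar.sum_eq_zero_of_ne_one (hprim hz)
    calc ∑ a : ZMod p, ψ₀ (a * z) = ∑ a : ZMod p, (ψ₀.mulShift z) a := by
          refine Finset.sum_congr rfl fun a _ => ?_
          rw [AddChar.mulShift_apply, mul_comm]
      _ = 0 := h2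
  apply hv
  funext y₀
  have hpC : (p : ℂ) ≠ 0 := Nat.cast_ne_zero.2 hp0
  have e1 : ∑ y : ZMod p, (∑ a : ZMod p, ψ₀ (a * (y - y₀))) * v y = (p : ℂ) * v y₀ := by
    rw [Finset.sum_eq_single y₀]
    · simp [AddChar.map_zero_eq_one, ZMod.card]
    · intro y _ hy
      rw [horth _ (sub_ne_zero.2 hy), zero_mul]
    · intro h; exact absurd (Finset.mem_univ _) h
  have e2 : ∑ y : ZMod p, (∑ a : ZMod p, ψ₀ (a * (y - y₀))) * v y = 0 := by
    calc ∑ y : ZMod p, (∑ a : ZMod p, ψ₀ (a * (y - y₀))) * v y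
        = ∑ y : ZMod p, ∑ a : ZMod p, ψ₀ (a * (y - y₀)) * v y := by
          refine Finset.sum_congr rfl fun y _ => ?_
          rw [Finset.sum_mul]
      _ = ∑ a : ZMod p, ∑ y : ZMod p, ψ₀ (a * (y - y₀)) * v y := Finset.sum_comm
      _ = ∑ a : ZMod p, ψ₀ (a * (-y₀)) * ∑ y : ZMod p, ψ₀ (a * y) * v y := by
          refine Finset.sum_congr rfl fun a _ => ?_
          rw [Finset.mul_sum]
          refine Finset.sum_congr rfl fun y _ => ?_
          have h : a * (y - y₀) = a * (-y₀) + a * y := by ring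
          rw [h, AddChar.map_add_eq_mul]; ring
      _ = 0 := by simp [hF]
  have : (p : ℂ) * v y₀ = 0 := by rw [← e1, e2]
  simpa [hpC] using this

/-- `S` contains exactly one of each pair `{x, -x}`, so `|S| = (p-1)/2`. -/
lemma card_S (p : ℕ) [Fact p.Prime] (S : Finset (ZMod p))
    (h0 : (0 : ZMod p) ∉ S)
    (hcompl : ∀ x : ZMod p, x ≠ 0 → (x ∉ S ↔ -x ∈ S)) :
    2 * S.card = p - 1 := by
  classical
  set T : Finset (ZMod p) := Finset.univ \ insert 0 S with hT
  have hmemT : ∀ x : ZMod p, x ∈ T ↔ x ≠ 0 ∧ x ∉ S := by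
    intro x; simp [hT, not_or]
  have hST : S.card = T.card := by
    refine Finset.card_bij (fun a _ => -a) ?_ ?_ ?_
    · intro a ha
      have ha0 : a ≠ 0 := fun h => h0 (h ▸ ha)
      rw [hmemT]
      exact ⟨neg_ne_zero.2 ha0, fun hna => ((hcompl a ha0).2 hna) ha⟩
    · intro a _ b _ h; exact neg_injective h
    · intro b hb
      rw [hmemT] at hb
      exact ⟨-b, (hcompl b hb.1).1 hb.2, neg_neg b⟩
  have hins : (insert 0 S).card = S.card + 1 := Finset.card_insert_of_notMem h0
  have hTcard : T.card = p - (S.card + 1) := by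
    rw [hT, Finset.card_sdiff_of_subset (Finset.subset_univ _), Finset.card_univ, ZMod.card, hins]
  have hle : (insert 0 S).card ≤ p := by
    have h := Finset.card_le_univ (insert 0 S)
    rwa [ZMod.card] at h
  omega

/-- Every eigenvalue of `T_p^m(S)` is a character sum `Σ_{s∈S} ψ(s)`; consequently,
assuming the Weil bound, `λ(T_p^m(S)) ≤ ((m-1)√p + 1)/2 ≤ m√p/2`. -/
theorem stmt16 (p m : ℕ) [Fact p.Prime] (hm : Even m) (hm0 : 0 < m)
    (hpm : p ≡ m + 1 [MOD 2 * m])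
    (S : Finset (ZMod p))
    (h0 : (0 : ZMod p) ∉ S)
    (hclosed : ∀ a ∈ S, ∀ x : ZMod p, x ≠ 0 → a * x ^ m ∈ S)
    (hcompl : ∀ x : ZMod p, x ≠ 0 → (x ∉ S ↔ -x ∈ S))
    (hWeil : ∀ ψ : AddChar (ZMod p) ℂ, ψ ≠ 1 → ∀ a : ZMod p, a ≠ 0 →
      ‖∑ x : ZMod p, ψ (a * x ^ m)‖ ≤ ((m : ℝ) - 1) * Real.sqrt p) :
    (∀ μ : ℂ, IsEigenvalue (adjTpm p S) μ →
      ∃ ψ : AddChar (ZMod p) ℂ, μ = ∑ s ∈ S, ψ s) ∧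
    (∀ μ : ℂ, IsEigenvalue (adjTpm p S) μ → μ ≠ ((p : ℂ) - 1) / 2 →
      ‖μ‖ ≤ (((m : ℝ) - 1) * Real.sqrt p + 1) / 2 ∧
      ‖μ‖ ≤ (m : ℝ) * Real.sqrt p / 2) := by
  classical
  have hp : p.Prime := Fact.out
  refine ⟨fun μ h => eig_char p S μ h, ?_⟩
  intro μ hμ hμne
  obtain ⟨ψ, hψ⟩ := eig_char p S μ hμ
  have hcard := card_S p S h0 hcompl
  have hp2 : 2 ≤ p := hp.two_le
  have hc1 : 1 ≤ S.card := by omega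
  have hcard' : 2 * S.card + 1 = p := by omega
  have hcastp : (p : ℂ) = 2 * (S.card : ℂ) + 1 := by
    have h := congrArg (Nat.cast : ℕ → ℂ) hcard'
    push_cast at h
    exact h.symm
  have hψ1 : ψ ≠ 1 := by
    rintro rfl
    apply hμne
    rw [hψ]
    simp only [AddChar.one_apply, Finset.sum_const, nsmul_eq_mul, mul_one]
    rw [hcastp]; ring
  -- the bijection `a ↦ a x^m` of `S` for each `x ≠ 0`
  have hbij : ∀ x : ZMod p, x ≠ 0 → ∑ a ∈ S, ψ (a * x ^ m) = ∑ s ∈ S, ψ s := by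
    intro x hx
    have hxm : (x : ZMod p) ^ m ≠ 0 := pow_ne_zero m hx
    refine Finset.sum_nbij' (fun a => a * x ^ m) (fun b => b * (x ^ m)⁻¹) ?_ ?_ ?_ ?_ ?_
    · intro a ha; exact hclosed a ha x hx
    · intro b hb
      have := hclosed b hb x⁻¹ (inv_ne_zero hx)
      rwa [inv_pow] at this
    · intro a _; exact mul_inv_cancel_right₀ hxm a
    · intro b _; exact inv_mul_cancel_right₀ hxm b
    · intro a _; rfl
  have key : ∑ a ∈ S, ∑ x : ZMod p, ψ (a * x ^ m)
      = (S.card : ℂ) + ((p : ℂ) - 1) * μ := by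
    rw [Finset.sum_comm, ← Finset.sum_erase_add _ _ (Finset.mem_univ (0 : ZMod p))]
    have h00 : ∑ a ∈ S, ψ (a * (0 : ZMod p) ^ m) = (S.card : ℂ) := by
      simp [zero_pow hm0.ne', AddChar.map_zero_eq_one]
    have hmain : ∑ x ∈ Finset.univ.erase (0 : ZMod p), ∑ a ∈ S, ψ (a * x ^ m)
        = ((p : ℂ) - 1) * μ := by
      rw [Finset.sum_congr rfl fun x hx => hbij x (Finset.ne_of_mem_erase hx),
        Finset.sum_const, Finset.card_erase_of_mem (Finset.mem_univ _),
        Finset.card_univ, ZMod.card, nsmul_eq_mul, hψ.symm]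
      congr 1
      rw [Nat.cast_sub (by omega : 1 ≤ p), Nat.cast_one]
    rw [h00, hmain]
    ring
  have hsq : (1 : ℝ) ≤ Real.sqrt p := by
    rw [show (1 : ℝ) = Real.sqrt 1 by simp]
    exact Real.sqrt_le_sqrt (by exact_mod_cast hp.one_le)
  have hm1 : (1 : ℝ) ≤ (m : ℝ) := by exact_mod_cast hm0
  have hWb : ‖(S.card : ℂ) + ((p : ℂ) - 1) * μ‖
      ≤ (S.card : ℝ) * (((m : ℝ) - 1) * Real.sqrt p) := by
    rw [← key]
    calc ‖∑ a ∈ S, ∑ x : ZMod p, ψ (a * x ^ m)‖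
        ≤ ∑ a ∈ S, ‖∑ x : ZMod p, ψ (a * x ^ m)‖ :=
          norm_sum_le _ _
      _ ≤ ∑ _a ∈ S, ((m : ℝ) - 1) * Real.sqrt p :=
          Finset.sum_le_sum fun a ha => hWeil ψ hψ1 a (fun h => h0 (h ▸ ha))
      _ = (S.card : ℝ) * (((m : ℝ) - 1) * Real.sqrt p) := by
          rw [Finset.sum_const, nsmul_eq_mul]
  have hre : (S.card : ℂ) + ((p : ℂ) - 1) * μ = (S.card : ℂ) * (1 + 2 * μ) := by
    rw [hcastp]; ring
  rw [hre, norm_mul, Complex.norm_natCast] at hWb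
  have hcpos : (0 : ℝ) < (S.card : ℝ) := by exact_mod_cast hc1
  have h12 : ‖1 + 2 * μ‖ ≤ ((m : ℝ) - 1) * Real.sqrt p :=
    (mul_le_mul_iff_of_pos_left hcpos).mp hWb
  have habs2 : ‖2 * μ‖ ≤ ‖1 + 2 * μ‖ + 1 := by
    calc ‖2 * μ‖ = ‖(1 + 2 * μ) + (-1)‖ := by
          congr 1; ring
      _ ≤ ‖1 + 2 * μ‖ + ‖(-1 : ℂ)‖ := norm_add_le _ _
      _ = ‖1 + 2 * μ‖ + 1 := by simp
  have h2abs : ‖2 * μ‖ = 2 * ‖μ‖ := by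
    rw [norm_mul]; simp
  have goal1 : ‖μ‖ ≤ (((m : ℝ) - 1) * Real.sqrt p + 1) / 2 := by
    rw [h2abs] at habs2
    linarith
  refine ⟨goal1, ?_⟩
  have hstep : ((m : ℝ) - 1) * Real.sqrt p + 1 ≤ (m : ℝ) * Real.sqrt p := by
    nlinarith [hsq, hm1]
  linarith
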